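/- Let x, y, z be distinct points in hyperbolic n-space, x' and y' the midpoints of the geodesics from x to z and y to z respectively. Then dist(x', y') = (1/2) · dist(x, y) if and only if the angle ∠xzy is 0 or π. -/

import Mathlib

open Real

/-- Inverse hyperbolic cosine. -/
noncomputable def arcosh (x : ℝ) : ℝ := Real.log (x + Real.sqrt (x ^ 2 - 1))

/-- A point of hyperbolic `n`-space in the Poincaré ball model. -/
abbrev HypSpace (n : ℕ) := {p : EuclideanSpace ℝ (Fin n) // ‖p‖ < 1}

/-- The hyperbolic distance in the Poincaré ball model. -/
noncomputable def hDist {n : ℕ} (x y : HypSpace n) : ℝ :=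
  _root_.arcosh (1 + 2 * ‖(x : EuclideanSpace ℝ (Fin n)) - (y : EuclideanSpace ℝ (Fin n))‖ ^ 2 /
    ((1 - ‖(x : EuclideanSpace ℝ (Fin n))‖ ^ 2) * (1 - ‖(y : EuclideanSpace ℝ (Fin n))‖ ^ 2)))

/-- `m` is the midpoint of the geodesic segment from `p` to `q`:  it lies on the segment
(distances add up) and divides it into two equal halves. -/
def IsHypMidpoint {n : ℕ} (p m q : HypSpace n) : Prop :=
  hDist p m = hDist p q / 2 ∧ hDist m q = hDist p q / 2


/-- The hyperbolic angle `∠ x z y` at the vertex `z`, defined via the hyperbolic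
law of cosines. -/
noncomputable def hAngle {n : ℕ} (x z y : HypSpace n) : ℝ :=
  Real.arccos ((Real.cosh (hDist z x) * Real.cosh (hDist z y) - Real.cosh (hDist x y)) /
    (Real.sinh (hDist z x) * Real.sinh (hDist z y)))

/-! ### Auxiliary material: the hyperboloid (Minkowski) model -/

namespace HypAux

lemma cosh_arcosh {t : ℝ} (ht : 1 ≤ t) : Real.cosh (_root_.arcosh t) = t := by
  have h1 : (0:ℝ) ≤ t ^ 2 - 1 := by nlinarith
  have h2 : Real.sqrt (t ^ 2 - 1) ^ 2 = t ^ 2 - 1 := Real.sq_sqrt h1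
  have h0 : 0 ≤ Real.sqrt (t ^ 2 - 1) := Real.sqrt_nonneg _
  have h3 : 0 < t + Real.sqrt (t ^ 2 - 1) := by nlinarith
  rw [_root_.arcosh, Real.cosh_eq, Real.exp_log h3, ← Real.log_inv, Real.exp_log (by positivity)]
  have : (t + Real.sqrt (t ^ 2 - 1))⁻¹ = t - Real.sqrt (t ^ 2 - 1) :=
    inv_eq_of_mul_eq_one_right (by nlinarith)
  rw [this]; ring

lemma arcosh_nonneg {t : ℝ} (ht : 1 ≤ t) : 0 ≤ _root_.arcosh t :=
  Real.log_nonneg (by nlinarith [Real.sqrt_nonneg (t ^ 2 - 1)])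

lemma arcosh_pos {t : ℝ} (ht : 1 < t) : 0 < _root_.arcosh t :=
  Real.log_pos (by nlinarith [Real.sqrt_nonneg (t ^ 2 - 1)])

lemma cosh_inj_nonneg {s t : ℝ} (hs : 0 ≤ s) (ht : 0 ≤ t)
    (h : Real.cosh s = Real.cosh t) : s = t := by
  have h1 : |s| ≤ |t| := Real.cosh_le_cosh.1 h.le
  have h2 : |t| ≤ |s| := Real.cosh_le_cosh.1 h.ge
  rw [abs_of_nonneg hs, abs_of_nonneg ht] at h1 h2
  linarith

lemma eq_of_sq_eq_sq {u v : ℝ} (hu : 0 < u) (hv : 0 < v) (h : u ^ 2 = v ^ 2) : u = v := by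
  apply le_antisymm <;> nlinarith

lemma cosh_half (t : ℝ) : Real.cosh t = 2 * Real.cosh (t / 2) ^ 2 - 1 := by
  have h := Real.cosh_add (t / 2) (t / 2)
  rw [show t / 2 + t / 2 = t by ring] at h
  have h2 := Real.cosh_sq (t / 2)
  nlinarith

variable {n : ℕ}

local notation "E" => EuclideanSpace ℝ (Fin n)

lemma one_sub_sq_pos (p : HypSpace n) : 0 < 1 - ‖(p : E)‖ ^ 2 := by
  have h := p.2
  have h0 : (0:ℝ) ≤ ‖(p : E)‖ := norm_nonneg _
  nlinarith

/-- The Minkowski bilinear form on `ℝ × E`. -/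
noncomputable def mb (U V : ℝ × EuclideanSpace ℝ (Fin n)) : ℝ :=
  U.1 * V.1 - inner ℝ U.2 V.2

lemma mb_comm (U V : ℝ × E) : mb U V = mb V U := by
  simp [mb, real_inner_comm, mul_comm]

lemma mb_add_left (U V W : ℝ × E) : mb (U + V) W = mb U W + mb V W := by
  simp [mb, inner_add_left]; ring

lemma mb_smul_left (r : ℝ) (U W : ℝ × E) : mb (r • U) W = r * mb U W := by
  simp [mb, inner_smul_left]; ring

lemma mb_sub_left (U V W : ℝ × E) : mb (U - V) W = mb U W - mb V W := by
  simp [mb, inner_sub_left]; ring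

lemma mb_add_right (U V W : ℝ × E) : mb W (U + V) = mb W U + mb W V := by
  rw [mb_comm, mb_add_left, mb_comm U W, mb_comm V W]

lemma mb_smul_right (r : ℝ) (U W : ℝ × E) : mb W (r • U) = r * mb W U := by
  rw [mb_comm, mb_smul_left, mb_comm]

lemma mb_sub_right (U V W : ℝ × E) : mb W (U - V) = mb W U - mb W V := by
  rw [mb_comm, mb_sub_left, mb_comm U W, mb_comm V W]

/-- The lift of a point of the Poincaré ball to the hyperboloid. -/
noncomputable def lift (p : HypSpace n) : ℝ × EuclideanSpace ℝ (Fin n) :=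
  ((1 + ‖(p : E)‖ ^ 2) / (1 - ‖(p : E)‖ ^ 2),
   (2 / (1 - ‖(p : E)‖ ^ 2)) • (p : E))

lemma lift_fst_pos (p : HypSpace n) : 0 < (lift p).1 := by
  have h := one_sub_sq_pos p
  have h0 : (0:ℝ) ≤ ‖(p : E)‖ ^ 2 := by positivity
  exact div_pos (by linarith) h

lemma mb_lift_self (p : HypSpace n) : mb (lift p) (lift p) = 1 := by
  have h := one_sub_sq_pos p
  simp only [mb, lift, inner_smul_left, inner_smul_right, real_inner_self_eq_norm_sq,
    RCLike.conj_to_real, map_div₀, map_ofNat, map_one, map_sub, map_pow]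
  field_simp
  ring

lemma cosh_hDist (p q : HypSpace n) :
    Real.cosh (hDist p q) = mb (lift p) (lift q) := by
  have hp := one_sub_sq_pos p
  have hq := one_sub_sq_pos q
  have harg : (1:ℝ) ≤ 1 + 2 * ‖(p : E) - (q : E)‖ ^ 2 /
      ((1 - ‖(p : E)‖ ^ 2) * (1 - ‖(q : E)‖ ^ 2)) := by
    have : (0:ℝ) ≤ 2 * ‖(p : E) - (q : E)‖ ^ 2 /
        ((1 - ‖(p : E)‖ ^ 2) * (1 - ‖(q : E)‖ ^ 2)) := by positivity
    linarith
  rw [hDist, cosh_arcosh harg]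
  simp only [mb, lift, inner_smul_left, inner_smul_right, RCLike.conj_to_real]
  rw [norm_sub_sq_real]
  field_simp
  ring

lemma hDist_nonneg (p q : HypSpace n) : 0 ≤ hDist p q := by
  have hp := one_sub_sq_pos p
  have hq := one_sub_sq_pos q
  refine arcosh_nonneg ?_
  have : (0:ℝ) ≤ 2 * ‖(p : E) - (q : E)‖ ^ 2 /
      ((1 - ‖(p : E)‖ ^ 2) * (1 - ‖(q : E)‖ ^ 2)) := by positivity
  linarith

lemma hDist_pos {p q : HypSpace n} (hpq : p ≠ q) : 0 < hDist p q := by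
  have hp := one_sub_sq_pos p
  have hq := one_sub_sq_pos q
  refine arcosh_pos ?_
  have hne : (p : E) - (q : E) ≠ 0 := by
    intro h
    exact hpq (Subtype.ext (by rwa [sub_eq_zero] at h))
  have h1 : 0 < ‖(p : E) - (q : E)‖ ^ 2 := pow_pos (norm_pos_iff.mpr hne) 2
  have : (0:ℝ) < 2 * ‖(p : E) - (q : E)‖ ^ 2 /
      ((1 - ‖(p : E)‖ ^ 2) * (1 - ‖(q : E)‖ ^ 2)) :=
    div_pos (by linarith) (mul_pos hp hq)
  linarith

lemma hDist_symm (p q : HypSpace n) : hDist p q = hDist q p := by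
  rw [hDist, hDist, norm_sub_rev, mul_comm (1 - ‖(p : E)‖ ^ 2)]

/-- Reverse Cauchy–Schwarz equality case on the upper hyperboloid. -/
lemma revCS_eq {U V : ℝ × EuclideanSpace ℝ (Fin n)} (hU : mb U U = 1) (hV : mb V V = 1)
    (hU1 : 0 < U.1) (hV1 : 0 < V.1) (h : mb U V = 1) : U = V := by
  have hu : U.1 * U.1 - ‖U.2‖ ^ 2 = 1 := by
    have e : mb U U = U.1 * U.1 - inner ℝ U.2 U.2 := rfl
    rw [e, real_inner_self_eq_norm_sq] at hU; exact hU
  have hv : V.1 * V.1 - ‖V.2‖ ^ 2 = 1 := by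
    have e : mb V V = V.1 * V.1 - inner ℝ V.2 V.2 := rfl
    rw [e, real_inner_self_eq_norm_sq] at hV; exact hV
  have huv : U.1 * V.1 - inner ℝ U.2 V.2 = (1:ℝ) := h
  have hcs : (inner ℝ U.2 V.2 : ℝ) ≤ ‖U.2‖ * ‖V.2‖ := real_inner_le_norm _ _
  have hn1 : (0:ℝ) ≤ ‖U.2‖ := norm_nonneg _
  have hn2 : (0:ℝ) ≤ ‖V.2‖ := norm_nonneg _
  have hu' : U.1 * U.1 = 1 + ‖U.2‖ ^ 2 := by linarith
  have hv' : V.1 * V.1 = 1 + ‖V.2‖ ^ 2 := by linarith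
  have e : (U.1 * V.1) ^ 2 = (1 + ‖U.2‖ ^ 2) * (1 + ‖V.2‖ ^ 2) := by
    have : (U.1 * V.1) ^ 2 = U.1 * U.1 * (V.1 * V.1) := by ring
    rw [this, hu', hv']
  have hposUV : 0 < U.1 * V.1 := mul_pos hU1 hV1
  -- U.1 * V.1 ≥ 1 + ‖U.2‖ * ‖V.2‖
  have key : U.1 * V.1 ≥ 1 + ‖U.2‖ * ‖V.2‖ := by
    nlinarith [e, sq_nonneg (‖U.2‖ - ‖V.2‖), hposUV, mul_nonneg hn1 hn2]
  have he1 : (inner ℝ U.2 V.2 : ℝ) = ‖U.2‖ * ‖V.2‖ := by nlinarith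
  have he2 : U.1 * V.1 = 1 + ‖U.2‖ * ‖V.2‖ := by nlinarith
  have hab : (‖U.2‖ - ‖V.2‖) ^ 2 = 0 := by nlinarith [e, he2, sq_nonneg (‖U.2‖ - ‖V.2‖)]
  have hn : ‖U.2‖ = ‖V.2‖ := by
    have := pow_eq_zero_iff (n := 2) (by norm_num) |>.1 hab
    linarith
  have hfst : U.1 = V.1 := by
    have hq : U.1 * U.1 = V.1 * V.1 := by rw [hu', hv', hn]
    exact le_antisymm (by nlinarith) (by nlinarith)
  have hsnd : U.2 = V.2 := by
    have : ‖U.2 - V.2‖ ^ 2 = 0 := by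
      rw [norm_sub_sq_real, he1, hn]; ring
    have := pow_eq_zero_iff (n := 2) (by norm_num) |>.1 this
    rwa [norm_eq_zero, sub_eq_zero] at this
  exact Prod.ext hfst hsnd

/-- On the orthogonal complement of a unit timelike vector the form is negative. -/
lemma mb_neg_of_perp {Z W : ℝ × EuclideanSpace ℝ (Fin n)} (hZ : mb Z Z = 1)
    (hW : mb Z W = 0) : mb W W ≤ 0 := by
  have hz : Z.1 * Z.1 - ‖Z.2‖ ^ 2 = 1 := by
    have e : mb Z Z = Z.1 * Z.1 - inner ℝ Z.2 Z.2 := rfl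
    rw [e, real_inner_self_eq_norm_sq] at hZ; exact hZ
  have hzw : Z.1 * W.1 - inner ℝ Z.2 W.2 = (0:ℝ) := hW
  have hcs : (inner ℝ Z.2 W.2 : ℝ) * inner ℝ Z.2 W.2 ≤ inner ℝ Z.2 Z.2 * inner ℝ W.2 W.2 :=
    real_inner_mul_inner_self_le _ _
  rw [real_inner_self_eq_norm_sq, real_inner_self_eq_norm_sq] at hcs
  have hmb : mb W W = W.1 * W.1 - ‖W.2‖ ^ 2 := by
    have e : mb W W = W.1 * W.1 - inner ℝ W.2 W.2 := rfl
    rw [e, real_inner_self_eq_norm_sq]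
  rw [hmb]
  have he : Z.1 * W.1 = inner ℝ Z.2 W.2 := by linarith
  have h1 : (Z.1 * W.1) ^ 2 ≤ ‖Z.2‖ ^ 2 * ‖W.2‖ ^ 2 := by rw [he, pow_two]; exact hcs
  have h3 : 1 ≤ Z.1 * Z.1 := by nlinarith [sq_nonneg ‖Z.2‖]
  nlinarith [h1, h3, hz, sq_nonneg ‖W.2‖]

/-- Cauchy–Schwarz on the orthogonal complement of a unit timelike vector. -/
lemma mb_cs_of_perp {Z U V : ℝ × EuclideanSpace ℝ (Fin n)} (hZ : mb Z Z = 1)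
    (hU : mb Z U = 0) (hV : mb Z V = 0) : mb U V ^ 2 ≤ mb U U * mb V V := by
  have h : ∀ t : ℝ, 0 ≤ (-(mb V V)) * (t * t) + (-(2 * mb U V)) * t + (-(mb U U)) := by
    intro t
    have hperp : mb Z (U + t • V) = 0 := by
      rw [mb_add_right, mb_smul_right, hU, hV]; ring
    have := mb_neg_of_perp hZ hperp
    have hexp : mb (U + t • V) (U + t • V) =
        mb U U + 2 * t * mb U V + t * t * mb V V := by
      rw [mb_add_left, mb_add_right, mb_add_right, mb_smul_left, mb_smul_left,
        mb_smul_right, mb_smul_right, mb_comm V U]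
      ring
    nlinarith
  have hd := discrim_le_zero h
  rw [discrim] at hd
  nlinarith

/-- The lift of a midpoint is the normalized sum of the lifts. -/
lemma lift_midpoint {p m q : HypSpace n} (h : IsHypMidpoint p m q) :
    lift m = (2 * Real.cosh (hDist p q / 2))⁻¹ • (lift p + lift q) := by
  set d := hDist p q with hd
  have hcd : 0 < Real.cosh (d / 2) := Real.cosh_pos _
  have hpm : mb (lift p) (lift m) = Real.cosh (d / 2) := by
    rw [← cosh_hDist, h.1]
  have hmq : mb (lift m) (lift q) = Real.cosh (d / 2) := by
    rw [← cosh_hDist, h.2]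
  have hpq : mb (lift p) (lift q) = Real.cosh d := (cosh_hDist p q).symm
  have hdd : Real.cosh d = 2 * Real.cosh (d / 2) ^ 2 - 1 := cosh_half d
  set M : ℝ × EuclideanSpace ℝ (Fin n) :=
    (2 * Real.cosh (d / 2))⁻¹ • (lift p + lift q) with hM
  have hMM : mb M M = 1 := by
    rw [hM, mb_smul_left, mb_smul_right, mb_add_left, mb_add_right, mb_add_right,
      mb_lift_self, mb_lift_self, hpq, mb_comm (lift q) (lift p), hpq, hdd]
    field_simp
    ring
  have hM1 : 0 < M.1 := by
    have h1 := lift_fst_pos p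
    have h2 := lift_fst_pos q
    have : M.1 = (2 * Real.cosh (d / 2))⁻¹ * ((lift p).1 + (lift q).1) := rfl
    rw [this]
    positivity
  have hmM : mb (lift m) M = 1 := by
    rw [hM, mb_smul_right, mb_add_right, mb_comm (lift m) (lift p), hpm, hmq]
    field_simp
    ring
  exact revCS_eq (mb_lift_self m) hMM (lift_fst_pos m) hM1 hmM

end HypAux

open HypAux

set_option maxHeartbeats 1000000 in
theorem midpoint_dist_eq_half_iff {n : ℕ} (x y z x' y' : HypSpace n)
    (hxy : x ≠ y) (hxz : x ≠ z) (hyz : y ≠ z)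
    (hx' : IsHypMidpoint x x' z) (hy' : IsHypMidpoint y y' z) :
    hDist x' y' = (1 / 2) * hDist x y ↔ (hAngle x z y = 0 ∨ hAngle x z y = Real.pi) := by
  set a := hDist x z with ha
  set b := hDist y z with hb
  set c := hDist x y with hc
  have ha0 : 0 < a := hDist_pos hxz
  have hb0 : 0 < b := hDist_pos hyz
  have hc0 : 0 ≤ c := hDist_nonneg x y
  have hsa : 0 < Real.sinh a := by rwa [Real.sinh_pos_iff]
  have hsb : 0 < Real.sinh b := by rwa [Real.sinh_pos_iff]
  -- the two key triangle inequalities via the hyperboloid model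
  have hXZ : mb (lift x) (lift z) = Real.cosh a := (cosh_hDist x z).symm
  have hYZ : mb (lift y) (lift z) = Real.cosh b := (cosh_hDist y z).symm
  have hXY : mb (lift x) (lift y) = Real.cosh c := (cosh_hDist x y).symm
  have htri : (Real.cosh c - Real.cosh a * Real.cosh b) ^ 2 ≤
      (Real.sinh a * Real.sinh b) ^ 2 := by
    have hZZ : mb (lift z) (lift z) = 1 := mb_lift_self z
    have hU : mb (lift z) (lift x - Real.cosh a • lift z) = 0 := by
      rw [mb_sub_right, mb_smul_right, hZZ, mb_comm (lift z) (lift x), hXZ]; ring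
    have hV : mb (lift z) (lift y - Real.cosh b • lift z) = 0 := by
      rw [mb_sub_right, mb_smul_right, hZZ, mb_comm (lift z) (lift y), hYZ]; ring
    have hcs := mb_cs_of_perp hZZ hU hV
    have hUU : mb (lift x - Real.cosh a • lift z) (lift x - Real.cosh a • lift z) =
        1 - Real.cosh a ^ 2 := by
      rw [mb_sub_left, mb_sub_right, mb_sub_right, mb_smul_left, mb_smul_left,
        mb_smul_right, mb_smul_right, mb_lift_self, hXZ, mb_comm (lift z) (lift x), hXZ,
        mb_lift_self]
      ring
    have hVV : mb (lift y - Real.cosh b • lift z) (lift y - Real.cosh b • lift z) =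
        1 - Real.cosh b ^ 2 := by
      rw [mb_sub_left, mb_sub_right, mb_sub_right, mb_smul_left, mb_smul_left,
        mb_smul_right, mb_smul_right, mb_lift_self, hYZ, mb_comm (lift z) (lift y), hYZ,
        mb_lift_self]
      ring
    have hUV : mb (lift x - Real.cosh a • lift z) (lift y - Real.cosh b • lift z) =
        Real.cosh c - Real.cosh a * Real.cosh b := by
      rw [mb_sub_left, mb_sub_right, mb_sub_right, mb_smul_left, mb_smul_left,
        mb_smul_right, mb_smul_right, hXY, hXZ, mb_comm (lift z) (lift y), hYZ,
        mb_lift_self]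
      ring
    rw [hUU, hVV, hUV] at hcs
    have hsq : (1 - Real.cosh a ^ 2) * (1 - Real.cosh b ^ 2) =
        (Real.sinh a * Real.sinh b) ^ 2 := by
      have h1 := Real.cosh_sq a
      have h2 := Real.cosh_sq b
      nlinarith
    linarith [hcs, hsq.symm.le, hsq.le]
  have hub : Real.cosh c ≤ Real.cosh (a + b) := by
    rw [Real.cosh_add]
    nlinarith [htri, mul_pos hsa hsb]
  have hlb : Real.cosh (a - b) ≤ Real.cosh c := by
    rw [Real.cosh_sub]
    nlinarith [htri, mul_pos hsa hsb]
  -- the distance between midpoints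
  have hmd : Real.cosh (hDist x' y') * (4 * Real.cosh (a / 2) * Real.cosh (b / 2)) =
      Real.cosh c + Real.cosh a + Real.cosh b + 1 := by
    have hmx := lift_midpoint hx'
    have hmy := lift_midpoint hy'
    have hca : 0 < Real.cosh (a / 2) := Real.cosh_pos _
    have hcb : 0 < Real.cosh (b / 2) := Real.cosh_pos _
    have : Real.cosh (hDist x' y') = mb (lift x') (lift y') := cosh_hDist x' y'
    rw [this, hmx, hmy, mb_smul_left, mb_smul_right, mb_add_left, mb_add_right,
      mb_add_right, hXY, hXZ, mb_comm (lift z) (lift y), hYZ, mb_lift_self]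
    rw [← ha, ← hb]
    field_simp
    ring
  -- reduce both sides to the disjunction of cosh equalities
  have key : ∀ s t : ℝ, Real.cosh s = Real.cosh t → 0 ≤ s → 0 ≤ t → s = t :=
    fun s t h hs ht => cosh_inj_nonneg hs ht h
  have hLHS : hDist x' y' = (1 / 2) * c ↔
      (Real.cosh c = Real.cosh (a + b) ∨ Real.cosh c = Real.cosh (a - b)) := by
    have hca : 0 < Real.cosh (a / 2) := Real.cosh_pos _
    have hcb : 0 < Real.cosh (b / 2) := Real.cosh_pos _
    have hcc : 0 < Real.cosh (c / 2) := Real.cosh_pos _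
    have hprod : Real.cosh (c / 2) * (4 * Real.cosh (a / 2) * Real.cosh (b / 2)) =
          Real.cosh c + Real.cosh a + Real.cosh b + 1 ↔
        (Real.cosh c = Real.cosh (a + b) ∨ Real.cosh c = Real.cosh (a - b)) := by
      have e1 : Real.cosh c = 2 * Real.cosh (c / 2) ^ 2 - 1 := cosh_half c
      have e2 : Real.cosh a = 2 * Real.cosh (a / 2) ^ 2 - 1 := cosh_half a
      have e3 : Real.cosh b = 2 * Real.cosh (b / 2) ^ 2 - 1 := cosh_half b
      have e5 : Real.cosh ((a + b) / 2) =
          Real.cosh (a / 2) * Real.cosh (b / 2) + Real.sinh (a / 2) * Real.sinh (b / 2) := by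
        have : (a + b) / 2 = a / 2 + b / 2 := by ring
        rw [this, Real.cosh_add]
      have e6 : Real.cosh ((a - b) / 2) =
          Real.cosh (a / 2) * Real.cosh (b / 2) - Real.sinh (a / 2) * Real.sinh (b / 2) := by
        have : (a - b) / 2 = a / 2 - b / 2 := by ring
        rw [this, Real.cosh_sub]
      have e7 : Real.cosh (a - b) = 2 * Real.cosh ((a - b) / 2) ^ 2 - 1 := cosh_half (a - b)
      have e8 : Real.cosh (a + b) = 2 * Real.cosh ((a + b) / 2) ^ 2 - 1 := cosh_half (a + b)
      have sa2 := Real.cosh_sq (a / 2)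
      have sb2 := Real.cosh_sq (b / 2)
      have hfac : Real.cosh (c / 2) * (4 * Real.cosh (a / 2) * Real.cosh (b / 2)) -
          (Real.cosh c + Real.cosh a + Real.cosh b + 1) =
          -2 * ((Real.cosh (c / 2) - Real.cosh ((a + b) / 2)) *
            (Real.cosh (c / 2) - Real.cosh ((a - b) / 2))) := by
        rw [e1, e2, e3, e5, e6]
        linear_combination (2 * (Real.cosh (b / 2) ^ 2 - 1)) * sa2 +
          (2 * Real.sinh (a / 2) ^ 2) * sb2
      constructor
      · intro h
        have h0 : (Real.cosh (c / 2) - Real.cosh ((a + b) / 2)) *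
            (Real.cosh (c / 2) - Real.cosh ((a - b) / 2)) = 0 := by
          have := hfac
          rw [h] at this
          linarith
        rcases mul_eq_zero.1 h0 with h1 | h1
        · left
          have : Real.cosh (c / 2) = Real.cosh ((a + b) / 2) := by linarith
          rw [e1, e8, this]
        · right
          have : Real.cosh (c / 2) = Real.cosh ((a - b) / 2) := by linarith
          rw [e1, e7, this]
      · intro h
        have hcc2 : 0 < Real.cosh ((a + b) / 2) := Real.cosh_pos _
        have hcc3 : 0 < Real.cosh ((a - b) / 2) := Real.cosh_pos _
        have h0 : (Real.cosh (c / 2) - Real.cosh ((a + b) / 2)) *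
            (Real.cosh (c / 2) - Real.cosh ((a - b) / 2)) = 0 := by
          rcases h with h | h
          · have : Real.cosh (c / 2) = Real.cosh ((a + b) / 2) := by
              rw [e1, e8] at h
              exact eq_of_sq_eq_sq hcc (Real.cosh_pos _) (by linarith)
            rw [this]; ring
          · have : Real.cosh (c / 2) = Real.cosh ((a - b) / 2) := by
              rw [e1, e7] at h
              exact eq_of_sq_eq_sq hcc (Real.cosh_pos _) (by linarith)
            rw [this]; ring
        linear_combination hfac - 2 * h0
    constructor
    · intro h
      have : Real.cosh (hDist x' y') = Real.cosh (c / 2) := by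
        rw [h]; congr 1; ring
      rw [this] at hmd
      exact hprod.1 hmd
    · intro h
      have h1 : Real.cosh (hDist x' y') * (4 * Real.cosh (a / 2) * Real.cosh (b / 2)) =
          Real.cosh (c / 2) * (4 * Real.cosh (a / 2) * Real.cosh (b / 2)) := by
        rw [hmd, hprod.2 h]
      have h2 : Real.cosh (hDist x' y') = Real.cosh (c / 2) := by
        have h4 : (0:ℝ) < 4 * Real.cosh (a / 2) * Real.cosh (b / 2) := by positivity
        exact mul_right_cancel₀ (ne_of_gt h4) h1
      have := key _ _ h2 (hDist_nonneg x' y') (by linarith)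
      rw [this]; ring
  rw [hLHS]
  -- now the right-hand side
  have hza : hDist z x = a := by rw [ha, hDist_symm]
  have hzb : hDist z y = b := by rw [hb, hDist_symm]
  unfold hAngle
  rw [hza, hzb, ← hc, Real.arccos_eq_zero, Real.arccos_eq_pi]
  have hS : 0 < Real.sinh a * Real.sinh b := by positivity
  have hub' : Real.cosh c ≤ Real.cosh a * Real.cosh b + Real.sinh a * Real.sinh b := by
    rw [← Real.cosh_add]; exact hub
  have hlb' : Real.cosh a * Real.cosh b - Real.sinh a * Real.sinh b ≤ Real.cosh c := by
    rw [← Real.cosh_sub]; exact hlb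
  constructor
  · rintro (h | h)
    · right
      rw [div_le_iff₀ hS]
      rw [h, Real.cosh_add]
      ring_nf
      linarith
    · left
      rw [le_div_iff₀ hS]
      rw [h, Real.cosh_sub]
      ring_nf
      linarith
  · rintro (h | h)
    · right
      rw [le_div_iff₀ hS] at h
      have : Real.cosh (a - b) = Real.cosh c := by
        rw [Real.cosh_sub]
        linarith [hlb']
      exact this.symm
    · left
      rw [div_le_iff₀ hS] at h
      have : Real.cosh (a + b) = Real.cosh c := by
        rw [Real.cosh_add]
        linarith [hub']
      exact this.symm
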